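/- Let 𝕂 be ℝ or ℂ, let X and Y be locally compact Hausdorff spaces, and let T : C_c(X,𝕂) → C_c(Y,𝕂) be a linear bijection such that for all f,g ∈ C_c(X,𝕂): ({f ≠ 0} ∩ {g ≠ 0} = ∅) if and only if ({Tf ≠ 0} ∩ {Tg ≠ 0} = ∅). Then there exist a homeomorphism φ : Y → X and a continuous nowhere-zero function p : Y → 𝕂 such that Tf(y) = p(y)·f(φ(y)) for all f ∈ C_c(X,𝕂) and all y ∈ Y. -/

import Mathlib

open Set Topology Function

set_option linter.unusedSectionVars false
set_option maxHeartbeats 1000000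


namespace Jarosz

variable {𝕜 X : Type*} [RCLike 𝕜] [TopologicalSpace X] [LocallyCompactSpace X] [T2Space X]

/-- A `𝕜`-valued bump: equal to `1` on an open neighborhood of `K`, compactly supported
inside `U`, norm `≤ 1`. -/
lemma exists_bump {K U : Set X} (hK : IsCompact K) (hU : IsOpen U) (hKU : K ⊆ U) :
    ∃ g : C(X, 𝕜), HasCompactSupport ⇑g ∧ tsupport ⇑g ⊆ U ∧
      (∃ V : Set X, IsOpen V ∧ K ⊆ V ∧ EqOn ⇑g 1 V) ∧ ∀ x, ‖g x‖ ≤ 1 := by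
  obtain ⟨k₁, hk₁c, hKk₁, hk₁U⟩ := exists_compact_between hK hU hKU
  obtain ⟨k₂, hk₂c, hk₁k₂, hk₂U⟩ := exists_compact_between hk₁c hU hk₁U
  obtain ⟨f, hf1, hf0, hfc, hficc⟩ := exists_continuous_one_zero_of_isCompact hk₁c
    (isOpen_interior (s := k₂)).isClosed_compl
    (disjoint_compl_right_iff_subset.mpr hk₁k₂)
  refine ⟨⟨fun x => (f x : 𝕜), RCLike.continuous_ofReal.comp f.continuous⟩, ?_, ?_, ?_, ?_⟩
  · have h1 : support (⇑(⟨fun x => (f x : 𝕜), RCLike.continuous_ofReal.comp f.continuous⟩ : C(X, 𝕜))) = support ⇑f := by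
      ext x; simp [RCLike.ofReal_eq_zero]
    rw [HasCompactSupport, tsupport, h1]; exact hfc
  · have hsupp : support (fun x => (f x : 𝕜)) ⊆ interior k₂ := by
      intro x hx
      by_contra hxk
      exact hx (by simp [hf0 hxk])
    refine (closure_mono hsupp).trans ?_
    exact (closure_minimal interior_subset hk₂c.isClosed).trans hk₂U
  · exact ⟨interior k₁, isOpen_interior, hKk₁, fun x hx => by
      simp [hf1 (interior_subset hx)]⟩
  · intro x
    have := hficc x
    simp only [ContinuousMap.coe_mk, RCLike.norm_ofReal]
    rw [abs_le]; constructor <;> linarith [this.1, this.2]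

variable {Y : Type*} [TopologicalSpace Y]

/-- Binary splitting of a compactly supported function subordinate to a cover by two opens. -/
lemma split_two (f : C(X, 𝕜)) (hf : HasCompactSupport ⇑f) {U V : Set X}
    (hU : IsOpen U) (hV : IsOpen V) (hUV : tsupport ⇑f ⊆ U ∪ V) :
    ∃ f₁ f₂ : C(X, 𝕜), HasCompactSupport ⇑f₁ ∧ HasCompactSupport ⇑f₂ ∧
      tsupport ⇑f₁ ⊆ U ∧ tsupport ⇑f₂ ⊆ V ∧ f = f₁ + f₂ := by
  obtain ⟨K₁, K₂, hK₁c, hK₂c, hK₁U, hK₂V, hK⟩ := hf.binary_compact_cover hU hV hUV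
  obtain ⟨g, hgc, hgU, ⟨W, hWo, hK₁W, hgW⟩, -⟩ := exists_bump (𝕜 := 𝕜) hK₁c hU hK₁U
  refine ⟨g * f, f - g * f, ?_, ?_, ?_, ?_, by ring⟩
  · exact hf.mono (fun x hx => by
      simp only [ContinuousMap.coe_mul, Pi.mul_apply, mem_support] at hx ⊢
      exact fun h => hx (by simp [h]))
  · exact hf.mono (fun x hx => by
      simp only [ContinuousMap.coe_sub, ContinuousMap.coe_mul, Pi.sub_apply, Pi.mul_apply,
        mem_support] at hx ⊢
      exact fun h => hx (by simp [h]))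
  · refine (closure_mono (show support ⇑(g * f) ⊆ support ⇑g from fun x hx => ?_)).trans hgU
    simp only [ContinuousMap.coe_mul, Pi.mul_apply, mem_support] at hx ⊢
    exact fun h => hx (by simp [h])
  · have hsub : support ⇑(f - g * f) ⊆ tsupport ⇑f \ W := by
      intro x hx
      simp only [ContinuousMap.coe_sub, ContinuousMap.coe_mul, Pi.sub_apply, Pi.mul_apply,
        mem_support] at hx
      constructor
      · exact subset_closure (fun h => hx (by simp [h]))
      · intro hxW
        exact hx (by simp [hgW hxW, sub_self])
    have hclosed : IsClosed (tsupport ⇑f \ W) := (isClosed_tsupport _).sdiff hWo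
    refine (closure_minimal hsub hclosed).trans ?_
    intro x hx
    rcases hK ▸ hx.1 with h | h
    · exact absurd (hK₁W h) hx.2
    · exact hK₂V h

end Jarosz


namespace Jarosz2

variable {𝕜 X Y : Type*} [RCLike 𝕜] [TopologicalSpace X] [LocallyCompactSpace X] [T2Space X]
variable [TopologicalSpace Y] [LocallyCompactSpace Y] [T2Space Y]

/-- Finite splitting subordinate to a finite open cover of the support. -/
lemma split_finset {ι : Type*} (s : Finset ι) (U : ι → Set X)
    (hU : ∀ i ∈ s, IsOpen (U i)) :
    ∀ f : C(X, 𝕜), HasCompactSupport ⇑f → tsupport ⇑f ⊆ ⋃ i ∈ s, U i →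
    ∃ g : ι → C(X, 𝕜), (∀ i ∈ s, HasCompactSupport ⇑(g i) ∧ tsupport ⇑(g i) ⊆ U i) ∧
      f = ∑ i ∈ s, g i := by
  classical
  induction s using Finset.induction_on with
  | empty =>
    intro f hf hsub
    refine ⟨fun _ => 0, fun i hi => absurd hi (Finset.notMem_empty i), ?_⟩
    simp only [Finset.sum_empty]
    ext x
    by_contra hx
    refine absurd (hsub (subset_closure (show f x ≠ 0 from fun h => hx ?_))) (by simp)
    show f x = (0 : C(X,𝕜)) x
    simpa using h
  | @insert a s ha ih =>
    intro f hf hsub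
    have hUo : IsOpen (⋃ i ∈ s, U i) := isOpen_biUnion (fun i hi => hU i (Finset.mem_insert_of_mem hi))
    have hsub' : tsupport ⇑f ⊆ U a ∪ ⋃ i ∈ s, U i := by
      intro x hx
      simpa [Finset.mem_insert, or_and_right, exists_or, mem_iUnion] using hsub hx
    obtain ⟨f₁, f₂, hf₁c, hf₂c, hf₁U, hf₂U, hsum⟩ :=
      Jarosz.split_two f hf (hU a (Finset.mem_insert_self a s)) hUo hsub'
    obtain ⟨g, hg, hgsum⟩ := ih (fun i hi => hU i (Finset.mem_insert_of_mem hi)) f₂ hf₂c hf₂U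
    refine ⟨Function.update g a f₁, fun i hi => ?_, ?_⟩
    · rcases Finset.mem_insert.mp hi with rfl | hi'
      · simpa using ⟨hf₁c, hf₁U⟩
      · have hne : i ≠ a := fun h => ha (h ▸ hi')
        simpa [Function.update_of_ne hne] using hg i hi'
    · rw [Finset.sum_insert ha, Function.update_self]
      have : ∑ i ∈ s, Function.update g a f₁ i = ∑ i ∈ s, g i :=
        Finset.sum_congr rfl (fun i hi => by
          have hne : i ≠ a := fun h => ha (h ▸ hi)
          simp [Function.update_of_ne hne])
      rw [this, ← hgsum, hsum]

variable (T : C(X, 𝕜) → C(Y, 𝕜))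
variable (hTadd : ∀ f g : C(X, 𝕜), HasCompactSupport ⇑f → HasCompactSupport ⇑g →
      T (f + g) = T f + T g)

section basic

include hTadd

lemma T_zero : T 0 = 0 := by
  have h0 : HasCompactSupport (⇑(0 : C(X,𝕜))) := by
    rw [HasCompactSupport, tsupport]
    have : support (⇑(0 : C(X,𝕜))) = ∅ := by ext x; simp
    rw [this]; simp
  have h := hTadd 0 0 h0 h0
  simp only [add_zero] at h
  exact (left_eq_add.mp h)

omit hTadd in
lemma hcs_sum {ι : Type*} (s : Finset ι) (g : ι → C(X, 𝕜))
    (hg : ∀ i ∈ s, HasCompactSupport ⇑(g i)) :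
    HasCompactSupport ⇑(∑ i ∈ s, g i) := by
  classical
  induction s using Finset.induction_on with
  | empty =>
    simp only [Finset.sum_empty]
    rw [HasCompactSupport, tsupport]
    have : support (⇑(0 : C(X,𝕜))) = ∅ := by ext x; simp
    rw [this]; simp
  | @insert a s ha ih =>
    rw [Finset.sum_insert ha]
    rw [show ⇑(g a + ∑ i ∈ s, g i) = ⇑(g a) + ⇑(∑ i ∈ s, g i) from rfl]
    exact (hg a (Finset.mem_insert_self a s)).add
      (ih (fun i hi => hg i (Finset.mem_insert_of_mem hi)))

lemma T_sum {ι : Type*} (s : Finset ι) (g : ι → C(X, 𝕜))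
    (hg : ∀ i ∈ s, HasCompactSupport ⇑(g i)) :
    T (∑ i ∈ s, g i) = ∑ i ∈ s, T (g i) := by
  classical
  induction s using Finset.induction_on with
  | empty => simpa using T_zero T hTadd
  | @insert a s ha ih =>
    rw [Finset.sum_insert ha, Finset.sum_insert ha,
      hTadd _ _ (hg a (Finset.mem_insert_self a s))
        (hcs_sum s g (fun i hi => hg i (Finset.mem_insert_of_mem hi))),
      ih (fun i hi => hg i (Finset.mem_insert_of_mem hi))]

end basic

end Jarosz2



namespace Jarosz3

variable {𝕜 X Y : Type*} [RCLike 𝕜] [TopologicalSpace X] [LocallyCompactSpace X] [T2Space X]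
variable [TopologicalSpace Y] [LocallyCompactSpace Y] [T2Space Y]

/-- `x` is a support point for `y` (w.r.t. `T`). -/
def IsSuppPt (T : C(X, 𝕜) → C(Y, 𝕜)) (y : Y) (x : X) : Prop :=
  ∀ U : Set X, IsOpen U → x ∈ U →
    ∃ f : C(X, 𝕜), HasCompactSupport ⇑f ∧ tsupport ⇑f ⊆ U ∧ T f y ≠ 0

variable (T : C(X, 𝕜) → C(Y, 𝕜))
variable (hTbij : Set.BijOn T {f : C(X, 𝕜) | HasCompactSupport ⇑f} {g : C(Y, 𝕜) | HasCompactSupport ⇑g})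
variable (hTadd : ∀ f g : C(X, 𝕜), HasCompactSupport ⇑f → HasCompactSupport ⇑g →
      T (f + g) = T f + T g)
variable (hTperp : ∀ f g : C(X, 𝕜), HasCompactSupport ⇑f → HasCompactSupport ⇑g →
      ({x | f x ≠ 0} ∩ {x | g x ≠ 0} = ∅ ↔ {y | T f y ≠ 0} ∩ {y | T g y ≠ 0} = ∅))

include hTperp in
/-- If `T f` and `T g` are both nonzero at `y`, then `f` and `g` have a common nonzero point. -/
lemma perp_pair (f g : C(X, 𝕜)) (hf : HasCompactSupport ⇑f) (hg : HasCompactSupport ⇑g)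
    {y : Y} (hfy : T f y ≠ 0) (hgy : T g y ≠ 0) : ∃ x, f x ≠ 0 ∧ g x ≠ 0 := by
  by_contra hcon
  push_neg at hcon
  have hdisj : {x | f x ≠ 0} ∩ {x | g x ≠ 0} = ∅ := by
    ext x; simp only [mem_inter_iff, mem_setOf_eq, mem_empty_iff_false, iff_false, not_and]
    intro h1 h2
    exact h2 (hcon x h1)
  have := (hTperp f g hf hg).mp hdisj
  exact absurd this (by
    apply Nonempty.ne_empty
    exact ⟨y, hfy, hgy⟩)

include hTperp in
/-- Germ lemma: if `f` vanishes on an open set containing a support point of `y`,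
then `T f y = 0`. -/
lemma germ_vanish {y : Y} {x : X} (hx : IsSuppPt T y x) (f : C(X, 𝕜))
    (hf : HasCompactSupport ⇑f) {V : Set X} (hV : IsOpen V) (hxV : x ∈ V)
    (hfV : ∀ z ∈ V, f z = 0) : T f y = 0 := by
  by_contra hfy
  obtain ⟨g, hgc, hgV, hgy⟩ := hx V hV hxV
  obtain ⟨z, hfz, hgz⟩ := perp_pair T hTperp f g hf hgc hfy hgy
  exact hfz (hfV z (hgV (subset_closure hgz)))

include hTperp in
/-- If `T f y ≠ 0` then the support point of `y` belongs to `tsupport f`. -/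
lemma suppPt_mem_tsupport {y : Y} {x : X} (hx : IsSuppPt T y x) (f : C(X, 𝕜))
    (hf : HasCompactSupport ⇑f) (hfy : T f y ≠ 0) : x ∈ tsupport ⇑f := by
  by_contra hmem
  exact hfy (germ_vanish T hTperp hx f hf (isOpen_compl_iff.mpr (isClosed_tsupport ⇑f)) hmem
    (fun z hz => image_eq_zero_of_notMem_tsupport hz))

include hTadd in
/-- Existence of a support point. -/
lemma exists_suppPt (y : Y) (f₀ : C(X, 𝕜)) (hf₀ : HasCompactSupport ⇑f₀)
    (hy : T f₀ y ≠ 0) : ∃ x, IsSuppPt T y x := by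
  by_contra hcon
  push_neg at hcon
  simp only [IsSuppPt, not_forall] at hcon
  choose U hUo hUx hUbad using fun x => hcon x
  have hcov : tsupport ⇑f₀ ⊆ ⋃ x : X, U x := fun z _ => mem_iUnion.mpr ⟨z, hUx z⟩
  obtain ⟨t, ht⟩ := hf₀.elim_finite_subcover U hUo hcov
  obtain ⟨g, hg, hgsum⟩ := Jarosz2.split_finset t U (fun i _ => hUo i) f₀ hf₀ ht
  have hTf₀ : T f₀ = ∑ i ∈ t, T (g i) := by
    rw [hgsum]; exact Jarosz2.T_sum T hTadd t g (fun i hi => (hg i hi).1)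
  have : ∃ i ∈ t, T (g i) y ≠ 0 := by
    by_contra hall
    push_neg at hall
    apply hy
    rw [hTf₀, ContinuousMap.sum_apply]
    exact Finset.sum_eq_zero hall
  obtain ⟨i, hit, hTgi⟩ := this
  exact hUbad i ⟨g i, (hg i hit).1, (hg i hit).2, hTgi⟩

include hTperp in
/-- Uniqueness of the support point. -/
lemma suppPt_unique {y : Y} {x₁ x₂ : X} (h₁ : IsSuppPt T y x₁) (h₂ : IsSuppPt T y x₂) :
    x₁ = x₂ := by
  by_contra hne
  obtain ⟨U₁, U₂, hU₁, hU₂, hx₁, hx₂, hd⟩ := t2_separation hne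
  obtain ⟨f₁, hf₁c, hf₁U, hf₁y⟩ := h₁ U₁ hU₁ hx₁
  obtain ⟨f₂, hf₂c, hf₂U, hf₂y⟩ := h₂ U₂ hU₂ hx₂
  obtain ⟨z, hz₁, hz₂⟩ := perp_pair T hTperp f₁ f₂ hf₁c hf₂c hf₁y hf₂y
  exact absurd (mem_inter (hf₁U (subset_closure hz₁)) (hf₂U (subset_closure hz₂)))
    (by rw [disjoint_iff_inter_eq_empty] at hd; simp [hd])

end Jarosz3


namespace Jarosz4

variable {𝕜 X Y : Type*} [RCLike 𝕜] [TopologicalSpace X] [LocallyCompactSpace X] [T2Space X]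
variable [TopologicalSpace Y] [LocallyCompactSpace Y] [T2Space Y]

variable (T : C(X, 𝕜) → C(Y, 𝕜))
variable (hTbij : Set.BijOn T {f : C(X, 𝕜) | HasCompactSupport ⇑f} {g : C(Y, 𝕜) | HasCompactSupport ⇑g})
variable (hTperp : ∀ f g : C(X, 𝕜), HasCompactSupport ⇑f → HasCompactSupport ⇑g →
      ({x | f x ≠ 0} ∩ {x | g x ≠ 0} = ∅ ↔ {y | T f y ≠ 0} ∩ {y | T g y ≠ 0} = ∅))

include hTbij in
/-- At every `y` there is a compactly supported `f` with `T f y ≠ 0`. -/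
lemma exists_nonzero_at (y : Y) : ∃ f : C(X, 𝕜), HasCompactSupport ⇑f ∧ T f y ≠ 0 := by
  obtain ⟨g, hgc, hgsub, ⟨V, hVo, hyV, hgV⟩, hgn⟩ :=
    Jarosz.exists_bump (𝕜 := 𝕜) (isCompact_singleton (x := y)) isOpen_univ (subset_univ _)
  obtain ⟨f, hf, hTf⟩ := hTbij.surjOn (show g ∈ {g : C(Y, 𝕜) | HasCompactSupport ⇑g} from hgc)
  refine ⟨f, hf, ?_⟩
  rw [hTf]
  have : g y = 1 := hgV (hyV rfl)
  simp [this]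

include hTperp in
/-- The support-point map is continuous. -/
lemma suppMap_continuous (φ : Y → X) (hφ : ∀ y, Jarosz3.IsSuppPt T y (φ y)) : Continuous φ := by
  rw [continuous_iff_continuousAt]
  intro y₀
  intro U hU
  rw [Filter.mem_map]
  obtain ⟨U', hU'sub, hU'o, hxU'⟩ := mem_nhds_iff.mp hU
  obtain ⟨K, hKc, hxK, hKU⟩ := exists_compact_subset hU'o hxU'
  obtain ⟨f, hfc, hfsub, hfy⟩ := hφ y₀ (interior K) isOpen_interior hxK
  have hWo : IsOpen {y | T f y ≠ 0} := by
    have : {y | T f y ≠ 0} = (⇑(T f)) ⁻¹' ({0}ᶜ) := by ext y; simp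
    rw [this]
    exact (isOpen_compl_iff.mpr isClosed_singleton).preimage (T f).continuous
  refine mem_nhds_iff.mpr ⟨{y | T f y ≠ 0}, ?_, hWo, hfy⟩
  intro y hy
  have := Jarosz3.suppPt_mem_tsupport T hTperp (hφ y) f hfc hy
  exact hU'sub (hKU (interior_subset (hfsub this)))

include hTperp in
/-- Support transfer: `tsupport (T f) ⊆ φ ⁻¹' (tsupport f)`. -/
lemma tsupport_transfer (φ : Y → X) (hφ : ∀ y, Jarosz3.IsSuppPt T y (φ y)) (hφc : Continuous φ)
    (f : C(X, 𝕜)) (hf : HasCompactSupport ⇑f) :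
    tsupport ⇑(T f) ⊆ φ ⁻¹' (tsupport ⇑f) := by
  apply closure_minimal
  · intro y hy
    exact Jarosz3.suppPt_mem_tsupport T hTperp (hφ y) f hf hy
  · exact (isClosed_tsupport _).preimage hφc

/-- The two support maps are inverse to each other. -/
lemma comp_eq_id (S : C(Y, 𝕜) → C(X, 𝕜)) (φ : Y → X) (ψ : X → Y)
    (htransT : ∀ f : C(X, 𝕜), HasCompactSupport ⇑f → tsupport ⇑(T f) ⊆ φ ⁻¹' (tsupport ⇑f))
    (htransS : ∀ g : C(Y, 𝕜), HasCompactSupport ⇑g → tsupport ⇑(S g) ⊆ ψ ⁻¹' (tsupport ⇑g))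
    (hST : ∀ f : C(X, 𝕜), HasCompactSupport ⇑f → S (T f) = f)
    (hTM : ∀ f : C(X, 𝕜), HasCompactSupport ⇑f → HasCompactSupport ⇑(T f)) :
    ∀ x : X, φ (ψ x) = x := by
  intro x
  by_contra hne
  obtain ⟨A, B, hA, hB, hxA, hxB, hd⟩ := t2_separation (Ne.symm hne)
  obtain ⟨f, hfc, hfsub, ⟨V, hVo, hxV, hfV⟩, -⟩ :=
    Jarosz.exists_bump (𝕜 := 𝕜) (isCompact_singleton (x := x)) hA (singleton_subset_iff.mpr hxA)
  have hxsupp : x ∈ tsupport ⇑f := subset_closure (by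
    show f x ≠ 0
    rw [hfV (hxV rfl)]
    simp)
  have hchain : tsupport ⇑f ⊆ ψ ⁻¹' (φ ⁻¹' (tsupport ⇑f)) := by
    have h1 : tsupport ⇑f = tsupport ⇑(S (T f)) := by rw [hST f hfc]
    calc tsupport ⇑f = tsupport ⇑(S (T f)) := h1
      _ ⊆ ψ ⁻¹' (tsupport ⇑(T f)) := htransS _ (hTM f hfc)
      _ ⊆ ψ ⁻¹' (φ ⁻¹' (tsupport ⇑f)) := preimage_mono (htransT f hfc)
  have : φ (ψ x) ∈ tsupport ⇑f := hchain hxsupp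
  have : φ (ψ x) ∈ A := hfsub this
  exact absurd (mem_inter hxB this) (by
    rw [disjoint_iff_inter_eq_empty] at hd
    rw [inter_comm] at hd
    simp [hd])
end Jarosz4

namespace Jarosz

/-- Band cutoff: `rho d t` is `0` for `t ≤ d/2` or `t ≥ 2d`, and `1` on `[3d/4, 3d/2]`. -/
noncomputable def rho (d t : ℝ) : ℝ :=
  max 0 (min 1 (min ((t - d/2)*(4/d)) ((2*d - t)*(2/d))))

lemma rho_continuous (d : ℝ) : Continuous (rho d) := by
  unfold rho; fun_prop

lemma rho_nonneg (d t : ℝ) : 0 ≤ rho d t := le_max_left _ _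

lemma rho_le_one (d t : ℝ) : rho d t ≤ 1 := max_le zero_le_one (min_le_left _ _)

lemma band_of_rho_ne_zero {d t : ℝ} (hd : 0 < d) (h : rho d t ≠ 0) :
    d/2 < t ∧ t < 2*d := by
  have hpos : 0 < min 1 (min ((t - d/2)*(4/d)) ((2*d - t)*(2/d))) := by
    rcases lt_max_iff.mp (lt_of_le_of_ne (rho_nonneg d t) (Ne.symm h)) with h' | h'
    · exact absurd h' (lt_irrefl 0)
    · exact h'
  have h1 : 0 < (t - d/2)*(4/d) := lt_of_lt_of_le hpos ((min_le_right _ _).trans (min_le_left _ _))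
  have h2 : 0 < (2*d - t)*(2/d) := lt_of_lt_of_le hpos ((min_le_right _ _).trans (min_le_right _ _))
  constructor
  · have key : t - d/2 = ((t - d/2)*(4/d))*(d/4) := by field_simp
    have : 0 < t - d/2 := by rw [key]; exact mul_pos h1 (by positivity)
    linarith
  · have key : 2*d - t = ((2*d - t)*(2/d))*(d/2) := by field_simp
    have : 0 < 2*d - t := by rw [key]; exact mul_pos h2 (by positivity)
    linarith

lemma rho_eq_one {d t : ℝ} (hd : 0 < d) (h1 : 3*d/4 < t) (h2 : t < 3*d/2) :
    rho d t = 1 := by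
  have ha : (1:ℝ) ≤ (t - d/2)*(4/d) := by
    have : (t - d/2)*(4/d) = (t*4 - d*2)/d := by field_simp; ring
    rw [this, le_div_iff₀ hd]
    linarith
  have hb : (1:ℝ) ≤ (2*d - t)*(2/d) := by
    have : (2*d - t)*(2/d) = (4*d - 2*t)/d := by field_simp; ring
    rw [this, le_div_iff₀ hd]
    linarith
  unfold rho
  rw [min_eq_left (le_min ha hb), max_eq_right zero_le_one]

end Jarosz

namespace Jarosz5
open Jarosz

variable {𝕜 X Y : Type*} [RCLike 𝕜] [TopologicalSpace X] [LocallyCompactSpace X] [T2Space X]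
variable [TopologicalSpace Y] [LocallyCompactSpace Y] [T2Space Y]

variable (T : C(X, 𝕜) → C(Y, 𝕜))
variable (hTadd : ∀ f g : C(X, 𝕜), HasCompactSupport ⇑f → HasCompactSupport ⇑g →
      T (f + g) = T f + T g)
variable (hTsmul : ∀ (c : 𝕜), ∀ f : C(X, 𝕜), HasCompactSupport ⇑f → T (c • f) = c • T f)
variable (hTperp : ∀ f g : C(X, 𝕜), HasCompactSupport ⇑f → HasCompactSupport ⇑g →
      ({x | f x ≠ 0} ∩ {x | g x ≠ 0} = ∅ ↔ {y | T f y ≠ 0} ∩ {y | T g y ≠ 0} = ∅))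

lemma hcs_smul (c : 𝕜) (f : C(X, 𝕜)) (hf : HasCompactSupport ⇑f) :
    HasCompactSupport ⇑(c • f) :=
  hf.mono (by rw [ContinuousMap.coe_smul]; exact support_const_smul_subset c ⇑f)

lemma hcs_sub (f g : C(X, 𝕜)) (hf : HasCompactSupport ⇑f) (hg : HasCompactSupport ⇑g) :
    HasCompactSupport ⇑(f - g) := by
  have h1 : ⇑(f - g) = ⇑f + (-⇑g) := by ext x; simp [sub_eq_add_neg]
  rw [h1]
  exact hf.add hg.neg

include hTadd hTsmul in
lemma T_sub (f g : C(X, 𝕜)) (hf : HasCompactSupport ⇑f) (hg : HasCompactSupport ⇑g) :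
    T (f - g) = T f - T g := by
  have hg' : HasCompactSupport ⇑((-1 : 𝕜) • g) := hcs_smul _ _ hg
  have h1 : f - g = f + (-1 : 𝕜) • g := by rw [neg_one_smul 𝕜 g]; exact sub_eq_add_neg f g
  rw [h1, hTadd f ((-1 : 𝕜) • g) hf hg', hTsmul (-1 : 𝕜) g hg, neg_one_smul 𝕜 (T g)]
  exact (sub_eq_add_neg (T f) (T g)).symm

include hTadd hTsmul hTperp in
/-- The key automatic-continuity step: if `h` vanishes at the support point of `y₀`,
then `T h y₀ = 0`. -/
lemma crux (hTM : ∀ f : C(X, 𝕜), HasCompactSupport ⇑f → HasCompactSupport ⇑(T f))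
    (φ : Y → X) (ψ : X → Y) (hφ : ∀ y, Jarosz3.IsSuppPt T y (φ y))
    (hφψ : ∀ x, φ (ψ x) = x) (hψφ : ∀ y, ψ (φ y) = y) (hψc : Continuous ψ)
    (h : C(X, 𝕜)) (hh : HasCompactSupport ⇑h) (y₀ : Y) (h0 : h (φ y₀) = 0) :
    T h y₀ = 0 := by
  by_contra hTh
  have hnormpos : 0 < ‖T h y₀‖ := norm_pos_iff.mpr hTh
  set c' : ℝ := ‖T h y₀‖ / 2 with hc'def
  have hc'pos : 0 < c' := by positivity
  set W : Set Y := {y | c' < ‖T h y‖} with hWdef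
  have hWo : IsOpen W := isOpen_lt continuous_const (T h).continuous.norm
  have hy₀W : y₀ ∈ W := by simp only [hWdef, mem_setOf_eq, hc'def]; linarith
  set Ω : Set X := ψ ⁻¹' W with hΩdef
  have hΩo : IsOpen Ω := hWo.preimage hψc
  have hx₀ : φ y₀ ∈ Ω := by
    simp only [hΩdef, mem_preimage, hψφ y₀]
    exact hy₀W
  -- step (4): points with small nonzero values of h, inside Ω
  have hpt : ∀ ε : ℝ, 0 < ε → ∃ x, x ∈ Ω ∧ 0 < ‖h x‖ ∧ ‖h x‖ < ε := by
    intro ε hε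
    by_contra hcon
    push_neg at hcon
    apply hTh
    have hOo : IsOpen (Ω ∩ {x | ‖h x‖ < ε}) :=
      hΩo.inter (isOpen_lt h.continuous.norm continuous_const)
    refine Jarosz3.germ_vanish T hTperp (hφ y₀) h hh hOo ⟨hx₀, by simp [h0, hε]⟩ ?_
    intro z hz
    by_contra hz0
    have h1 := hcon z hz.1 (norm_pos_iff.mpr hz0)
    exact absurd hz.2 (not_lt.mpr h1)
  choose pt h1 h2 h3 using hpt
  set step : {e : ℝ // 0 < e} → {e : ℝ // 0 < e} :=
    fun e => ⟨‖h (pt e.1 e.2)‖ / 4, by have := h2 e.1 e.2; positivity⟩ with hstepdef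
  set eseq : ℕ → {e : ℝ // 0 < e} := fun n => step^[n] ⟨1, one_pos⟩ with heseqdef
  set xs : ℕ → X := fun n => pt (eseq n).1 (eseq n).2 with hxsdef
  set δ : ℕ → ℝ := fun n => ‖h (xs n)‖ with hδdef
  have hδpos : ∀ n, 0 < δ n := fun n => h2 _ _
  have hδlt : ∀ n, δ n < (eseq n).1 := fun n => h3 _ _
  have hxΩ : ∀ n, xs n ∈ Ω := fun n => h1 _ _
  have hsucc : ∀ n, (eseq (n+1)).1 = δ n / 4 := by
    intro n
    show (step^[n+1] ⟨1, one_pos⟩).1 = _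
    rw [Function.iterate_succ_apply']
  have hstep_le : ∀ k, (eseq (k+1)).1 ≤ (eseq k).1 := by
    intro n
    rw [hsucc n]
    have := hδlt n
    have := (eseq n).2
    linarith
  have hanti : ∀ m n, m ≤ n → (eseq n).1 ≤ (eseq m).1 :=
    fun m n hmn => antitone_nat_of_succ_le (f := fun j => (eseq j).1) hstep_le hmn
  have hmono : ∀ m n, m < n → (eseq n).1 ≤ δ m / 4 := by
    intro m n hmn
    have := hanti (m+1) n hmn
    rwa [hsucc m] at this
  have hgeo : ∀ n, (eseq n).1 ≤ (1/4 : ℝ)^n := by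
    intro n
    induction n with
    | zero => simp [heseqdef]
    | succ n ih =>
      rw [hsucc n, pow_succ]
      have := hδlt n
      nlinarith [hδpos n]
  -- bands
  set Band : ℕ → Set X := fun n => {x | δ n / 2 < ‖h x‖} ∩ {x | ‖h x‖ < 2 * δ n} with hBanddef
  set Nn : ℕ → Set X := fun n => {x | 3 * δ n / 4 < ‖h x‖} ∩ {x | ‖h x‖ < 3 * δ n / 2} with hNndef
  have hBando : ∀ n, IsOpen (Band n) := fun n =>
    (isOpen_lt continuous_const h.continuous.norm).inter
      (isOpen_lt h.continuous.norm continuous_const)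
  have hNno : ∀ n, IsOpen (Nn n) := fun n =>
    (isOpen_lt continuous_const h.continuous.norm).inter
      (isOpen_lt h.continuous.norm continuous_const)
  have hxBand : ∀ n, xs n ∈ Band n := fun n =>
    ⟨by simp only [mem_setOf_eq]; have := hδpos n; linarith,
     by simp only [mem_setOf_eq]; have := hδpos n; linarith⟩
  have hxNn : ∀ n, xs n ∈ Nn n := fun n =>
    ⟨by simp only [mem_setOf_eq]; have := hδpos n; linarith,
     by simp only [mem_setOf_eq]; have := hδpos n; linarith⟩
  -- the cutoff functions
  set k : ℕ → C(X, 𝕜) := fun n =>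
    ⟨fun x => ((rho (δ n) ‖h x‖ : ℝ) : 𝕜) * h x,
      (RCLike.continuous_ofReal.comp ((rho_continuous (δ n)).comp h.continuous.norm)).mul
        h.continuous⟩ with hkdef
  have hkapp : ∀ n x, k n x = ((rho (δ n) ‖h x‖ : ℝ) : 𝕜) * h x := fun n x => rfl
  have hkBand : ∀ n x, k n x ≠ 0 → x ∈ Band n := by
    intro n x hx
    rw [hkapp] at hx
    have hrho : rho (δ n) ‖h x‖ ≠ 0 := by
      intro hr
      apply hx
      rw [hr]
      simp
    obtain ⟨hb1, hb2⟩ := band_of_rho_ne_zero (hδpos n) hrho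
    exact ⟨hb1, hb2⟩
  have hkc : ∀ n, HasCompactSupport ⇑(k n) := by
    intro n
    apply hh.mono
    intro x hx
    rw [mem_support, hkapp] at hx
    exact fun hkx => hx (by rw [hkx, mul_zero])
  have hkNn : ∀ n, ∀ x ∈ Nn n, k n x = h x := by
    intro n x hx
    rw [hkapp, rho_eq_one (hδpos n) hx.1 hx.2]
    simp
  have hknorm : ∀ n x, ‖k n x‖ ≤ 2 * (1/4 : ℝ)^n := by
    intro n x
    by_cases hz : k n x = 0
    · rw [hz, norm_zero]; positivity
    · have hband := hkBand n x hz
      rw [hkapp, norm_mul, RCLike.norm_ofReal, abs_of_nonneg (rho_nonneg _ _)]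
      have hr1 : rho (δ n) ‖h x‖ ≤ 1 := rho_le_one _ _
      have hh2 : ‖h x‖ < 2 * δ n := hband.2
      have hδe : δ n ≤ (1/4:ℝ)^n := le_trans (le_of_lt (hδlt n)) (hgeo n)
      have hnn : 0 ≤ ‖h x‖ := norm_nonneg _
      nlinarith [rho_nonneg (δ n) ‖h x‖]
  have hdisj : ∀ m n, m ≠ n → Band m ∩ Band n = ∅ := by
    have key : ∀ m n, m < n → Band m ∩ Band n = ∅ := by
      intro m n hmn
      ext x
      simp only [mem_inter_iff, mem_empty_iff_false, iff_false, not_and]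
      intro hxm hxn
      have h1' : δ m / 2 < ‖h x‖ := hxm.1
      have h2' : ‖h x‖ < 2 * δ n := hxn.2
      have h3' : δ n < (eseq n).1 := hδlt n
      have h4' : (eseq n).1 ≤ δ m / 4 := hmono m n hmn
      linarith
    intro m n hmn
    rcases lt_or_gt_of_ne hmn with hlt | hgt
    · exact key m n hlt
    · rw [inter_comm]; exact key n m hgt
  -- the hump function G
  have hsummable : Summable (fun n : ℕ => ((n:ℝ)+1) * (2*(1/4:ℝ)^n)) := by
    have ha : Summable (fun n : ℕ => (n:ℝ)^1 * (1/4:ℝ)^n) :=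
      summable_pow_mul_geometric_of_norm_lt_one 1
        (by rw [Real.norm_eq_abs, abs_of_nonneg] <;> norm_num)
    have hb : Summable (fun n : ℕ => ((1:ℝ)/4)^n) :=
      summable_geometric_of_lt_one (by norm_num) (by norm_num)
    exact ((ha.add hb).mul_left 2).congr (fun n => by ring)
  have hnormn : ∀ n : ℕ, ‖((n:𝕜)+1)‖ = (n:ℝ)+1 := by
    intro n
    have : ((n:𝕜)+1) = (((n+1 : ℕ)):𝕜) := by push_cast; ring
    rw [this, RCLike.norm_natCast]
    push_cast; ring
  have hterm_bound : ∀ (n : ℕ) (x : X), ‖((n:𝕜)+1) * k n x‖ ≤ ((n:ℝ)+1) * (2*(1/4:ℝ)^n) := by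
    intro n x
    rw [norm_mul, hnormn n]
    exact mul_le_mul_of_nonneg_left (hknorm n x) (by positivity)
  set G : C(X, 𝕜) :=
    ⟨fun x => ∑' n : ℕ, ((n:𝕜)+1) * k n x,
      continuous_tsum (fun n => (continuous_const.mul (k n).continuous)) hsummable
        hterm_bound⟩ with hGdef
  have hGapp : ∀ x, G x = ∑' n : ℕ, ((n:𝕜)+1) * k n x := fun x => rfl
  have hGzero : ∀ x, h x = 0 → G x = 0 := by
    intro x hx
    rw [hGapp]
    have : ∀ n : ℕ, ((n:𝕜)+1) * k n x = 0 := by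
      intro n
      rw [hkapp, hx, mul_zero, mul_zero]
    rw [tsum_congr this, tsum_zero]
  have hGc : HasCompactSupport ⇑G := by
    apply hh.mono
    intro x hx
    rw [mem_support] at hx ⊢
    exact fun hhx => hx (hGzero x hhx)
  have hGBand : ∀ n, ∀ x ∈ Band n, G x = ((n:𝕜)+1) * k n x := by
    intro n x hx
    rw [hGapp]
    apply tsum_eq_single n
    intro m hm
    have : k m x = 0 := by
      by_contra hkm
      have := hkBand m x hkm
      have hempty := hdisj m n hm
      exact absurd (mem_inter this hx) (by rw [hempty]; simp)
    rw [this, mul_zero]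
  -- the points in Y
  set ys : ℕ → Y := fun n => ψ (xs n) with hysdef
  have hφys : ∀ n, φ (ys n) = xs n := fun n => hφψ (xs n)
  have hysW : ∀ n, c' < ‖T h (ys n)‖ := fun n => hxΩ n
  -- evaluation of T G at ys n
  have hTGval : ∀ n, T G (ys n) = ((n:𝕜)+1) * T h (ys n) := by
    intro n
    have hkcn := hkc n
    have hsmulc : HasCompactSupport ⇑(((n:𝕜)+1) • k n) := hcs_smul _ _ hkcn
    have hDc : HasCompactSupport ⇑(G - ((n:𝕜)+1) • k n) :=
      hcs_sub _ _ hGc hsmulc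
    have hTD : T (G - ((n:𝕜)+1) • k n) (ys n) = 0 := by
      refine Jarosz3.germ_vanish T hTperp (hφ (ys n)) _ hDc (hBando n) (by rw [hφys n]; exact hxBand n) ?_
      intro z hz
      have := hGBand n z hz
      simp only [ContinuousMap.sub_apply, ContinuousMap.smul_apply, smul_eq_mul]
      rw [this]; ring
    have hThk : T (h - k n) (ys n) = 0 := by
      have hhk : HasCompactSupport ⇑(h - k n) := hcs_sub _ _ hh hkcn
      refine Jarosz3.germ_vanish T hTperp (hφ (ys n)) _ hhk (hNno n) (by rw [hφys n]; exact hxNn n) ?_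
      intro z hz
      simp only [ContinuousMap.sub_apply]
      rw [hkNn n z hz]; ring
    have e1 : T (G - ((n:𝕜)+1) • k n) = T G - ((n:𝕜)+1) • T (k n) := by
      rw [T_sub T hTadd hTsmul G (((n:𝕜)+1) • k n) hGc hsmulc, hTsmul _ _ hkcn]
    have e2 : T (h - k n) = T h - T (k n) := T_sub T hTadd hTsmul h (k n) hh hkcn
    have hTk : T (k n) (ys n) = T h (ys n) := by
      have h' : (T h - T (k n)) (ys n) = 0 := by rw [← e2]; exact hThk
      simp only [ContinuousMap.sub_apply] at h'
      exact (sub_eq_zero.mp h').symm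
    have h0' : T G (ys n) = ((n:𝕜)+1) * T (k n) (ys n) := by
      have h' : (T G - ((n:𝕜)+1) • T (k n)) (ys n) = 0 := by rw [← e1]; exact hTD
      simp only [ContinuousMap.sub_apply, ContinuousMap.smul_apply, smul_eq_mul] at h'
      exact sub_eq_zero.mp h'
    rw [h0', hTk]
  -- final contradiction
  obtain ⟨C, hC⟩ := (T G).continuous.bounded_above_of_compact_support (hTM G hGc)
  obtain ⟨n, hn⟩ := exists_nat_gt (C / c')
  have hbound : ‖T G (ys n)‖ ≤ C := hC (ys n)
  have hval : ‖T G (ys n)‖ = ((n:ℝ)+1) * ‖T h (ys n)‖ := by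
    rw [hTGval n, norm_mul, hnormn n]
  have hgt : C < ‖T G (ys n)‖ := by
    rw [hval]
    have hW := hysW n
    have hCn : C < (n:ℝ) * c' := by
      rw [div_lt_iff₀ hc'pos] at hn
      linarith
    have : (n:ℝ) * c' ≤ ((n:ℝ)+1) * c' := by nlinarith [hc'pos]
    nlinarith [hc'pos, hW, Nat.cast_nonneg (α := ℝ) n]
  linarith

end Jarosz5


/-- **Jarosz' theorem.** A linear `⊥`-isomorphism `T : C_c(X,𝕂) → C_c(Y,𝕂)` (with `𝕂 = ℝ`
or `ℂ`) is a weighted composition operator: `Tf(y) = p(y)·f(φ(y))` for a homeomorphism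
`φ : Y → X` and a continuous nowhere-zero function `p : Y → 𝕂`. -/
theorem stmt_16 {𝕜 X Y : Type*} [RCLike 𝕜]
    [TopologicalSpace X] [LocallyCompactSpace X] [T2Space X]
    [TopologicalSpace Y] [LocallyCompactSpace Y] [T2Space Y]
    (T : C(X, 𝕜) → C(Y, 𝕜))
    (hTbij : Set.BijOn T {f | HasCompactSupport ⇑f} {g | HasCompactSupport ⇑g})
    (hTadd : ∀ f g : C(X, 𝕜), HasCompactSupport ⇑f → HasCompactSupport ⇑g →
      T (f + g) = T f + T g)
    (hTsmul : ∀ (c : 𝕜), ∀ f : C(X, 𝕜), HasCompactSupport ⇑f → T (c • f) = c • T f)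
    (hTperp : ∀ f g : C(X, 𝕜), HasCompactSupport ⇑f → HasCompactSupport ⇑g →
      ({x | f x ≠ 0} ∩ {x | g x ≠ 0} = ∅ ↔ {y | T f y ≠ 0} ∩ {y | T g y ≠ 0} = ∅)) :
    ∃ (φ : Y ≃ₜ X) (p : Y → 𝕜), Continuous p ∧ (∀ y, p y ≠ 0) ∧
      ∀ f : C(X, 𝕜), HasCompactSupport ⇑f → ∀ y, T f y = p y * f (φ y) := by
  classical
  -- the inverse map
  have hinv : Set.InvOn (Function.invFunOn T {f : C(X, 𝕜) | HasCompactSupport ⇑f}) T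
      {f : C(X, 𝕜) | HasCompactSupport ⇑f} {g : C(Y, 𝕜) | HasCompactSupport ⇑g} :=
    hTbij.invOn_invFunOn
  set S : C(Y, 𝕜) → C(X, 𝕜) := Function.invFunOn T {f : C(X, 𝕜) | HasCompactSupport ⇑f}
    with hSdef
  have hST : ∀ f : C(X, 𝕜), HasCompactSupport ⇑f → S (T f) = f := fun f hf => hinv.1 hf
  have hTS : ∀ g : C(Y, 𝕜), HasCompactSupport ⇑g → T (S g) = g := fun g hg => hinv.2 hg
  have hSM : ∀ g : C(Y, 𝕜), HasCompactSupport ⇑g → HasCompactSupport ⇑(S g) :=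
    fun g hg => hTbij.surjOn.mapsTo_invFunOn hg
  have hTM : ∀ f : C(X, 𝕜), HasCompactSupport ⇑f → HasCompactSupport ⇑(T f) :=
    fun f hf => hTbij.mapsTo hf
  have hcs_add : ∀ f g : C(X, 𝕜), HasCompactSupport ⇑f → HasCompactSupport ⇑g →
      HasCompactSupport ⇑(f + g) := fun f g hf hg => hf.add hg
  have hcs_addY : ∀ f g : C(Y, 𝕜), HasCompactSupport ⇑f → HasCompactSupport ⇑g →
      HasCompactSupport ⇑(f + g) := fun f g hf hg => hf.add hg
  have hSadd : ∀ g₁ g₂ : C(Y, 𝕜), HasCompactSupport ⇑g₁ → HasCompactSupport ⇑g₂ →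
      S (g₁ + g₂) = S g₁ + S g₂ := by
    intro g₁ g₂ h₁ h₂
    apply hTbij.injOn (hSM _ (hcs_addY g₁ g₂ h₁ h₂))
      (show S g₁ + S g₂ ∈ {f : C(X, 𝕜) | HasCompactSupport ⇑f} from
        hcs_add _ _ (hSM g₁ h₁) (hSM g₂ h₂))
    rw [hTS _ (hcs_addY g₁ g₂ h₁ h₂), hTadd _ _ (hSM g₁ h₁) (hSM g₂ h₂),
      hTS g₁ h₁, hTS g₂ h₂]
  have hSsmul : ∀ (c : 𝕜) (g : C(Y, 𝕜)), HasCompactSupport ⇑g → S (c • g) = c • S g := by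
    intro c g hg
    apply hTbij.injOn (hSM _ (Jarosz5.hcs_smul c g hg))
      (show c • S g ∈ {f : C(X, 𝕜) | HasCompactSupport ⇑f} from Jarosz5.hcs_smul c _ (hSM g hg))
    rw [hTS _ (Jarosz5.hcs_smul c g hg), hTsmul c _ (hSM g hg), hTS g hg]
  have hSperp : ∀ g₁ g₂ : C(Y, 𝕜), HasCompactSupport ⇑g₁ → HasCompactSupport ⇑g₂ →
      ({y | g₁ y ≠ 0} ∩ {y | g₂ y ≠ 0} = ∅ ↔ {x | S g₁ x ≠ 0} ∩ {x | S g₂ x ≠ 0} = ∅) := by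
    intro g₁ g₂ h₁ h₂
    have := hTperp (S g₁) (S g₂) (hSM _ h₁) (hSM _ h₂)
    rw [hTS _ h₁, hTS _ h₂] at this
    exact this.symm
  -- support maps
  have hφex : ∀ y : Y, ∃ x, Jarosz3.IsSuppPt T y x := by
    intro y
    obtain ⟨f₀, hf₀, hy⟩ := Jarosz4.exists_nonzero_at T hTbij y
    exact Jarosz3.exists_suppPt T hTadd y f₀ hf₀ hy
  choose φ hφ using hφex
  have hSbij : Set.BijOn S {g : C(Y, 𝕜) | HasCompactSupport ⇑g}
      {f : C(X, 𝕜) | HasCompactSupport ⇑f} :=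
    Set.InvOn.bijOn ⟨fun g hg => hTS g hg, fun f hf => hST f hf⟩
      (fun g hg => hSM g hg) (fun f hf => hTM f hf)
  have hψex : ∀ x : X, ∃ y, Jarosz3.IsSuppPt S x y := by
    intro x
    obtain ⟨g₀, hg₀, hx⟩ := Jarosz4.exists_nonzero_at S hSbij x
    exact Jarosz3.exists_suppPt S hSadd x g₀ hg₀ hx
  choose ψ hψ using hψex
  have hφc : Continuous φ := Jarosz4.suppMap_continuous T hTperp φ hφ
  have hψc : Continuous ψ := Jarosz4.suppMap_continuous S hSperp ψ hψ
  have htransT := Jarosz4.tsupport_transfer T hTperp φ hφ hφc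
  have htransS := Jarosz4.tsupport_transfer S hSperp ψ hψ hψc
  have hφψ : ∀ x, φ (ψ x) = x := Jarosz4.comp_eq_id T S φ ψ htransT htransS hST hTM
  have hψφ : ∀ y, ψ (φ y) = y := Jarosz4.comp_eq_id S T ψ φ htransS htransT hTS hSM
  -- the Jarosz5.crux
  have hcrux : ∀ h : C(X, 𝕜), HasCompactSupport ⇑h → ∀ y, h (φ y) = 0 → T h y = 0 :=
    fun h hh y h0 => Jarosz5.crux T hTadd hTsmul hTperp hTM φ ψ hφ hφψ hψφ hψc h hh y h0
  -- bump functions near each support point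
  have hbump : ∀ y : Y, ∃ e : C(X, 𝕜), HasCompactSupport ⇑e ∧
      ∃ V : Set X, IsOpen V ∧ φ y ∈ V ∧ EqOn ⇑e 1 V := by
    intro y
    obtain ⟨g, hc, _, ⟨V, hVo, hmem, hEq⟩, -⟩ :=
      Jarosz.exists_bump (𝕜 := 𝕜) (isCompact_singleton (x := φ y)) isOpen_univ (subset_univ _)
    exact ⟨g, hc, V, hVo, hmem rfl, hEq⟩
  choose e hec V hVo hVmem hVeq using hbump
  set p : Y → 𝕜 := fun y => T (e y) y with hpdef
  -- the weighted-composition identity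
  have hkey : ∀ f : C(X, 𝕜), HasCompactSupport ⇑f → ∀ y, T f y = p y * f (φ y) := by
    intro f hf y
    have hsm : HasCompactSupport ⇑(f (φ y) • e y) := Jarosz5.hcs_smul _ _ (hec y)
    have hfe : HasCompactSupport ⇑(f - f (φ y) • e y) := Jarosz5.hcs_sub _ _ hf hsm
    have h0 : (f - f (φ y) • e y) (φ y) = 0 := by
      have h1 : (e y) (φ y) = 1 := hVeq y (hVmem y)
      simp [h1]
    have hz := hcrux _ hfe y h0
    rw [Jarosz5.T_sub T hTadd hTsmul _ _ hf hsm, hTsmul _ _ (hec y)] at hz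
    simp only [ContinuousMap.sub_apply, ContinuousMap.smul_apply, smul_eq_mul] at hz
    have := sub_eq_zero.mp hz
    rw [this, hpdef]
    ring
  -- p is nowhere zero
  have hpne : ∀ y, p y ≠ 0 := by
    intro y hp
    obtain ⟨f, hf, hfy⟩ := Jarosz4.exists_nonzero_at T hTbij y
    exact hfy (by rw [hkey f hf y, hp, zero_mul])
  -- p is continuous
  have hpc : Continuous p := by
    rw [continuous_iff_continuousAt]
    intro y₀
    have hO : IsOpen (φ ⁻¹' V y₀) := (hVo y₀).preimage hφc
    have hagree : ∀ y ∈ φ ⁻¹' V y₀, p y = T (e y₀) y := by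
      intro y hy
      have hd : (e y₀ - e y) (φ y) = 0 := by
        have h1 : (e y₀) (φ y) = 1 := hVeq y₀ hy
        have h2 : (e y) (φ y) = 1 := hVeq y (hVmem y)
        simp [h1, h2]
      have hz := hcrux _ (Jarosz5.hcs_sub _ _ (hec y₀) (hec y)) y hd
      rw [Jarosz5.T_sub T hTadd hTsmul _ _ (hec y₀) (hec y)] at hz
      simp only [ContinuousMap.sub_apply] at hz
      exact (sub_eq_zero.mp hz).symm
    have hev : p =ᶠ[nhds y₀] fun y => T (e y₀) y :=
      Filter.eventuallyEq_of_mem (hO.mem_nhds (by exact hVmem y₀)) hagree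
    exact ContinuousAt.congr ((T (e y₀)).continuous.continuousAt) hev.symm
  exact ⟨⟨⟨φ, ψ, hψφ, hφψ⟩, hφc, hψc⟩, p, hpc, hpne, hkey⟩
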